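/- Let k > 0, ε > 0, let g : [0,ε) → ℝ be continuous, and let f : (0,ε) → ℝ be a bounded differentiable function satisfying f′(x) + (k/x)·f(x) = g(x) for all x ∈ (0,ε). Then lim_{x→0⁺} f(x)/x = g(0)/(k+1); in particular f extends continuously to 0 with f(0) = 0 and f(x) = (g(0)/(k+1))·x + o(x) as x → 0⁺. -/

import Mathlib

open Real Filter Set intervalIntegral MeasureTheory

/-- If `k > 0`, `g` is continuous on `[0,ε)` and `f` is bounded and differentiable
on `(0,ε)` with `f′(x) + (k/x) f(x) = g(x)`, then `f(x)/x → g(0)/(k+1)` as `x → 0⁺`;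
in particular `f` extends continuously to `0` with `f(0) = 0`, and
`f(x) = (g(0)/(k+1)) x + o(x)`. -/
theorem stmt_13 (k ε : ℝ) (hk : 0 < k) (hε : 0 < ε) (g f : ℝ → ℝ)
    (hg : ContinuousOn g (Set.Ico 0 ε))
    (hbdd : ∃ C : ℝ, ∀ x ∈ Set.Ioo (0:ℝ) ε, |f x| ≤ C)
    (hODE : ∀ x ∈ Set.Ioo (0:ℝ) ε, HasDerivAt f (g x - (k / x) * f x) x) :
    Filter.Tendsto (fun x => f x / x) (nhdsWithin 0 (Set.Ioi 0))
      (nhds (g 0 / (k + 1))) ∧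
    Filter.Tendsto f (nhdsWithin 0 (Set.Ioi 0)) (nhds 0) := by
  obtain ⟨C, hC⟩ := hbdd
  have hC0 : 0 ≤ C := le_trans (abs_nonneg _) (hC (ε/2) ⟨by linarith, by linarith⟩)
  -- continuity of the integrand on `[0, b]` for `b < ε`
  have hcont : ∀ b : ℝ, b < ε → ContinuousOn (fun t => t ^ k * g t) (Set.Icc 0 b) := by
    intro b hb
    apply ContinuousOn.mul
    · exact continuousOn_id.rpow_const fun t _ => Or.inr hk.le
    · exact hg.mono fun t ht => ⟨ht.1, lt_of_le_of_lt ht.2 hb⟩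
  -- the key identity: `x ^ k * f x = ∫ t in 0..x, t ^ k * g t`
  have key : ∀ x ∈ Set.Ioo (0:ℝ) ε, x ^ k * f x = ∫ t in (0:ℝ)..x, t ^ k * g t := by
    intro x hx
    obtain ⟨hx0, hxε⟩ := hx
    have hintx : IntervalIntegrable (fun t => t ^ k * g t) volume 0 x :=
      (hcont x hxε).intervalIntegrable_of_Icc hx0.le
    -- FTC on `[a, x]` for `0 < a < x`
    have hFTC : ∀ a ∈ Set.Ioo (0:ℝ) x,
        (∫ t in a..x, t ^ k * g t) = x ^ k * f x - a ^ k * f a := by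
      intro a ha
      apply intervalIntegral.integral_eq_sub_of_hasDerivAt
      · intro t ht
        rw [Set.uIcc_of_le ha.2.le] at ht
        have ht0 : 0 < t := lt_of_lt_of_le ha.1 ht.1
        have htε : t < ε := lt_of_le_of_lt ht.2 hxε
        have hd := (Real.hasDerivAt_rpow_const (p := k) (Or.inl ht0.ne')).mul
          (hODE t ⟨ht0, htε⟩)
        refine hd.congr_deriv ?_
        rw [Real.rpow_sub_one ht0.ne' k]
        field_simp
        ring
      · refine hintx.mono_set ?_
        rw [Set.uIcc_of_le ha.2.le, Set.uIcc_of_le hx0.le]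
        exact Set.Icc_subset_Icc ha.1.le le_rfl
    -- bound for `g` on `[0, x]`
    obtain ⟨M, hM⟩ := (isCompact_Icc : IsCompact (Set.Icc (0:ℝ) x)).exists_bound_of_continuousOn
      (hg.mono fun t ht => ⟨ht.1, lt_of_le_of_lt ht.2 hxε⟩)
    have hM0 : 0 ≤ M := le_trans (norm_nonneg _) (hM 0 ⟨le_rfl, hx0.le⟩)
    -- the filter
    set l := nhdsWithin (0:ℝ) (Set.Ioo 0 x) with hl
    haveI : l.NeBot := left_nhdsWithin_Ioo_neBot hx0
    have hev : ∀ᶠ a in l, a ∈ Set.Ioo (0:ℝ) x := self_mem_nhdsWithin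
    -- `a ^ k * f a → 0`
    have h1 : Tendsto (fun a : ℝ => a ^ k * f a) l (nhds 0) := by
      apply squeeze_zero_norm' (a := fun a : ℝ => a ^ k * C)
      · filter_upwards [hev] with a ha
        have ha0 : 0 ≤ a ^ k := Real.rpow_nonneg ha.1.le k
        rw [Real.norm_eq_abs, abs_mul, abs_of_nonneg ha0]
        exact mul_le_mul_of_nonneg_left (hC a ⟨ha.1, lt_trans ha.2 hxε⟩) ha0
      · have : Tendsto (fun a : ℝ => a ^ k) (nhds 0) (nhds 0) := by
          have := (Real.continuousAt_rpow_const 0 k (Or.inr hk.le))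
          simpa [Real.zero_rpow hk.ne'] using this.tendsto
        simpa using ((this.mono_left nhdsWithin_le_nhds).mul_const C)
    -- `∫ t in 0..a → 0`
    have h2 : Tendsto (fun a : ℝ => ∫ t in (0:ℝ)..a, t ^ k * g t) l (nhds 0) := by
      apply squeeze_zero_norm' (a := fun a : ℝ => x ^ k * M * a)
      · filter_upwards [hev] with a ha
        have hb : ∀ t ∈ Set.uIoc (0:ℝ) a, ‖t ^ k * g t‖ ≤ x ^ k * M := by
          intro t ht
          rw [Set.uIoc_of_le ha.1.le] at ht
          rw [norm_mul, Real.norm_eq_abs (t ^ k),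
            abs_of_nonneg (Real.rpow_nonneg ht.1.le k)]
          exact mul_le_mul (Real.rpow_le_rpow ht.1.le (le_trans ht.2 ha.2.le) hk.le)
            (hM t ⟨ht.1.le, le_trans ht.2 ha.2.le⟩) (norm_nonneg _)
            (Real.rpow_nonneg hx0.le k)
        have := intervalIntegral.norm_integral_le_of_norm_le_const hb
        simpa [abs_of_nonneg ha.1.le] using this
      · have : Tendsto (fun a : ℝ => x ^ k * M * a) (nhds 0) (nhds (x ^ k * M * 0)) :=
          (tendsto_id.const_mul _)
        simpa using this.mono_left nhdsWithin_le_nhds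
    -- combine the two limits of `a ↦ ∫ t in a..x`
    have hA : Tendsto (fun a : ℝ => ∫ t in a..x, t ^ k * g t) l
        (nhds (x ^ k * f x)) := by
      have : (fun a : ℝ => ∫ t in a..x, t ^ k * g t)
          =ᶠ[l] fun a => x ^ k * f x - a ^ k * f a := by
        filter_upwards [hev] with a ha using hFTC a ha
      rw [tendsto_congr' this]
      simpa using (tendsto_const_nhds.sub h1)
    have hB : Tendsto (fun a : ℝ => ∫ t in a..x, t ^ k * g t) l
        (nhds (∫ t in (0:ℝ)..x, t ^ k * g t)) := by
      have heq : (fun a : ℝ => ∫ t in a..x, t ^ k * g t)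
          =ᶠ[l] fun a => (∫ t in (0:ℝ)..x, t ^ k * g t) - ∫ t in (0:ℝ)..a, t ^ k * g t := by
        filter_upwards [hev] with a ha
        have hia : IntervalIntegrable (fun t => t ^ k * g t) volume 0 a := by
          refine hintx.mono_set ?_
          rw [Set.uIcc_of_le ha.1.le, Set.uIcc_of_le hx0.le]
          exact Set.Icc_subset_Icc le_rfl ha.2.le
        rw [intervalIntegral.integral_interval_sub_left hintx hia]
      rw [tendsto_congr' heq]
      simpa using (tendsto_const_nhds.sub h2)
    exact tendsto_nhds_unique hA hB
  -- main estimate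
  have hk1 : (0:ℝ) < k + 1 := by linarith
  have main : Filter.Tendsto (fun x => f x / x) (nhdsWithin 0 (Set.Ioi 0))
      (nhds (g 0 / (k + 1))) := by
    rw [Metric.tendsto_nhdsWithin_nhds]
    intro δ hδ
    have hg0 : ContinuousWithinAt g (Set.Ico 0 ε) 0 := hg 0 ⟨le_rfl, hε⟩
    rw [Metric.continuousWithinAt_iff] at hg0
    obtain ⟨r₁, hr₁, hr⟩ := hg0 (δ/2) (half_pos hδ)
    refine ⟨min r₁ ε, lt_min hr₁ hε, ?_⟩
    intro x hx hdx
    rw [Real.dist_eq, sub_zero] at hdx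
    have hx0 : 0 < x := hx
    have hxr : x < r₁ := lt_of_lt_of_le (lt_of_abs_lt hdx) (min_le_left _ _)
    have hxε : x < ε := lt_of_lt_of_le (lt_of_abs_lt hdx) (min_le_right _ _)
    have hxk : (0:ℝ) < x ^ k := Real.rpow_pos_of_pos hx0 k
    have hxk1 : (0:ℝ) < x ^ (k+1) := Real.rpow_pos_of_pos hx0 (k+1)
    -- integrabilities
    have hint1 : IntervalIntegrable (fun t => t ^ k * g t) volume 0 x :=
      (hcont x hxε).intervalIntegrable_of_Icc hx0.le
    have hint2 : IntervalIntegrable (fun t => t ^ k * g 0) volume 0 x := by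
      apply ContinuousOn.intervalIntegrable_of_Icc hx0.le
      exact (continuousOn_id.rpow_const fun t _ => Or.inr hk.le).mul continuousOn_const
    -- value of `∫ t^k * g 0`
    have hval : (∫ t in (0:ℝ)..x, t ^ k * g 0) = g 0 * x ^ (k+1) / (k+1) := by
      rw [intervalIntegral.integral_mul_const, integral_rpow (Or.inl (by linarith : (-1:ℝ) < k))]
      rw [Real.zero_rpow (by positivity)]
      ring
    -- the difference integral bound
    have hdiff : ‖(∫ t in (0:ℝ)..x, t ^ k * g t) - ∫ t in (0:ℝ)..x, t ^ k * g 0‖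
        ≤ x ^ k * (δ/2) * x := by
      rw [← intervalIntegral.integral_sub hint1 hint2]
      have hb : ∀ t ∈ Set.uIoc (0:ℝ) x, ‖t ^ k * g t - t ^ k * g 0‖ ≤ x ^ k * (δ/2) := by
        intro t ht
        rw [Set.uIoc_of_le hx0.le] at ht
        rw [← mul_sub, norm_mul, Real.norm_eq_abs (t ^ k),
          abs_of_nonneg (Real.rpow_nonneg ht.1.le k)]
        have htg : ‖g t - g 0‖ ≤ δ/2 := by
          have := hr (x := t) ⟨ht.1.le, lt_of_le_of_lt ht.2 hxε⟩
            (by rw [Real.dist_eq, sub_zero, abs_of_nonneg ht.1.le];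
                exact lt_of_le_of_lt ht.2 hxr)
          rw [Real.dist_eq] at this
          exact le_of_lt this
        exact mul_le_mul (Real.rpow_le_rpow ht.1.le ht.2 hk.le) htg (norm_nonneg _)
          (Real.rpow_nonneg hx0.le k)
      have := intervalIntegral.norm_integral_le_of_norm_le_const hb
      simpa [abs_of_nonneg hx0.le] using this
    -- convert to the statement about `f x / x`
    have hfx : f x = (∫ t in (0:ℝ)..x, t ^ k * g t) / x ^ k := by
      rw [← key x ⟨hx0, hxε⟩]; field_simp
    have hxk1' : x ^ (k+1) = x ^ k * x := by
      rw [Real.rpow_add hx0, Real.rpow_one]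
    have heq2 : f x / x - g 0 / (k+1)
        = ((∫ t in (0:ℝ)..x, t ^ k * g t) - ∫ t in (0:ℝ)..x, t ^ k * g 0) / (x ^ k * x) := by
      rw [hfx, hval, hxk1']
      field_simp
    rw [Real.dist_eq, heq2, abs_div, abs_of_pos (by positivity : (0:ℝ) < x ^ k * x),
      div_lt_iff₀ (by positivity : (0:ℝ) < x ^ k * x)]
    calc |(∫ t in (0:ℝ)..x, t ^ k * g t) - ∫ t in (0:ℝ)..x, t ^ k * g 0|
        ≤ x ^ k * (δ/2) * x := hdiff
      _ < δ * (x ^ k * x) := by nlinarith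
  refine ⟨main, ?_⟩
  have hxid : Tendsto (fun x : ℝ => x) (nhdsWithin 0 (Set.Ioi 0)) (nhds 0) :=
    tendsto_id.mono_left nhdsWithin_le_nhds
  have := main.mul hxid
  rw [mul_zero] at this
  refine this.congr' ?_
  filter_upwards [self_mem_nhdsWithin] with x hx
  exact div_mul_cancel₀ _ (ne_of_gt hx)
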